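/- Let Γ(i−1, 𝔓, 𝔔, w) = (i, 𝔓', 𝔔', w') be one step of sign insertion in which an entry a bumps an entry b from 𝔓 (the non-appending case). Then, viewing the concatenations as window notations of affine permutations, 𝔓' ∗ w' is obtained from 𝔓 ∗ w by applying a sequence of adjacent transposition moves (right star operations / Knuth moves) followed by right multiplication by the shift element ω. -/

import Mathlib

/-- The extended affine permutation whose window notation is the list `l`
(of length `n`): position `i` is congruent to `r + 1` modulo `n` with
`r = (i - 1) % n`, and values are shifted by multiples of `n`. -/
def windowFun (n : ℕ) (l : List ℤ) : ℤ → ℤ :=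
  fun i => l.getD ((i - 1) % (n : ℤ)).toNat 0 + ((i - 1) / (n : ℤ)) * (n : ℤ)

/-- A right star operation (Knuth move) on extended affine permutations, viewed
as functions `ℤ → ℤ`: swap the values at window positions `p, p + 1` (and all
their translates), subject to the admissibility condition that `u (p - 1)` or
`u (p + 2)` lies strictly between `u p` and `u (p + 1)`. -/
def RightStar (n : ℕ) (u v : ℤ → ℤ) : Prop :=
  ∃ p : ℤ,
    ((min (u p) (u (p + 1)) < u (p + 2) ∧ u (p + 2) < max (u p) (u (p + 1))) ∨
     (min (u p) (u (p + 1)) < u (p - 1) ∧ u (p - 1) < max (u p) (u (p + 1)))) ∧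
    (∀ k : ℤ, v (p + k * n) = u (p + 1 + k * n) ∧ v (p + 1 + k * n) = u (p + k * n)) ∧
    (∀ x : ℤ, (∀ k : ℤ, x ≠ p + k * n ∧ x ≠ p + 1 + k * n) → v x = u x)

lemma windowFun_eval (n : ℕ) (hn : 0 < n) (L : List ℤ) (p k : ℤ)
    (h1 : 1 ≤ p) (h2 : p ≤ (n : ℤ)) :
    windowFun n L (p + k * n) = L.getD (p - 1).toNat 0 + k * n := by
  have hn' : (0:ℤ) < n := by exact_mod_cast hn
  unfold windowFun
  have e1 : p + k * n - 1 = (p - 1) + k * n := by ring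
  rw [e1, Int.add_mul_emod_self_right, Int.emod_eq_of_lt (by omega) (by omega),
    Int.add_mul_ediv_right _ _ (by omega : (n:ℤ) ≠ 0),
    Int.ediv_eq_zero_of_lt (by omega) (by omega), zero_add]

lemma windowFun_eval0 (n : ℕ) (hn : 0 < n) (L : List ℤ) (p : ℤ)
    (h1 : 1 ≤ p) (h2 : p ≤ (n : ℤ)) :
    windowFun n L p = L.getD (p - 1).toNat 0 := by
  have := windowFun_eval n hn L p 0 h1 h2
  simpa using this

lemma getD_mid (X Y : List ℤ) (c : ℤ) : (X ++ c :: Y).getD X.length 0 = c := by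
  rw [List.getD_eq_getElem?_getD, List.getElem?_append_right (le_refl _)]
  simp

lemma getD_left (X Y : List ℤ) (j : ℕ) (h : j < X.length) :
    (X ++ Y).getD j 0 = X.getD j 0 := by
  rw [List.getD_eq_getElem?_getD, List.getElem?_append_left h, List.getD_eq_getElem?_getD]

lemma getD_right (X Y : List ℤ) (j : ℕ) (h : X.length ≤ j) :
    (X ++ Y).getD j 0 = Y.getD (j - X.length) 0 := by
  rw [List.getD_eq_getElem?_getD, List.getElem?_append_right h, List.getD_eq_getElem?_getD]

lemma getD_mid1 (X Y : List ℤ) (c d : ℤ) :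
    (X ++ c :: d :: Y).getD (X.length + 1) 0 = d := by
  have h : X ++ c :: d :: Y = (X ++ [c]) ++ d :: Y := by simp
  rw [h]
  have := getD_mid (X ++ [c]) Y d
  simpa using this

lemma getD_mid2 (X Y : List ℤ) (c d f : ℤ) :
    (X ++ c :: d :: f :: Y).getD (X.length + 2) 0 = f := by
  have h : X ++ c :: d :: f :: Y = (X ++ [c, d]) ++ f :: Y := by simp
  rw [h]
  have := getD_mid (X ++ [c, d]) Y f
  simpa [add_comm] using this

lemma swap_far (n : ℕ) (hn : 0 < n) (X Y : List ℤ) (c d : ℤ)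
    (hlen : (X ++ c :: d :: Y).length = n) (x : ℤ)
    (hx : ∀ k : ℤ, x ≠ (X.length + 1 : ℤ) + k * n ∧ x ≠ (X.length + 1 : ℤ) + 1 + k * n) :
    windowFun n (X ++ d :: c :: Y) x = windowFun n (X ++ c :: d :: Y) x := by
  have hn' : (0:ℤ) < n := by exact_mod_cast hn
  have hr : 0 ≤ (x - 1) % n ∧ (x - 1) % n < n :=
    ⟨Int.emod_nonneg _ (by omega), Int.emod_lt_of_pos _ hn'⟩
  have hxe : x = ((x - 1) % n + 1) + ((x - 1) / n) * n := by
    have h := Int.mul_ediv_add_emod (x - 1) (n:ℤ)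
    have hc : ((x-1)/(n:ℤ)) * n = (n:ℤ) * ((x-1)/n) := mul_comm _ _
    omega
  obtain ⟨h1, h2⟩ := hx ((x - 1) / n)
  set r : ℤ := (x - 1) % n with hrdef
  have hXl : (X.length : ℤ) ≥ 0 := by positivity
  have hrne : r ≠ X.length ∧ r ≠ X.length + 1 := by constructor <;> (intro hcon; omega)
  unfold windowFun
  congr 1
  have hx1 : x - 1 = r + ((x-1)/n) * n := by
    have h := Int.mul_ediv_add_emod (x - 1) (n:ℤ)
    have hc : ((x-1)/(n:ℤ)) * n = (n:ℤ) * ((x-1)/n) := mul_comm _ _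
    omega
  rw [hx1, Int.add_mul_emod_self_right, Int.emod_eq_of_lt hr.1 hr.2]
  rcases lt_or_ge r.toNat X.length with h | h
  · rw [getD_left _ _ _ h, getD_left _ _ _ h]
  · have h3 : X.length + 2 ≤ r.toNat := by omega
    rw [getD_right _ _ _ (by omega), getD_right _ _ _ (by omega)]
    have e : r.toNat - X.length = (r.toNat - X.length - 2) + 2 := by omega
    rw [e]
    simp [List.getD]

lemma swap_vals (n : ℕ) (hn : 0 < n) (X Y : List ℤ) (c d : ℤ)
    (hlen : (X ++ c :: d :: Y).length = n) (k : ℤ) :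
    windowFun n (X ++ d :: c :: Y) ((X.length + 1 : ℤ) + k * n) =
      windowFun n (X ++ c :: d :: Y) ((X.length + 1 : ℤ) + 1 + k * n) ∧
    windowFun n (X ++ d :: c :: Y) ((X.length + 1 : ℤ) + 1 + k * n) =
      windowFun n (X ++ c :: d :: Y) ((X.length + 1 : ℤ) + k * n) := by
  have hlen' : X.length + 2 + Y.length = n := by
    have := hlen; simp at this; omega
  have hXl : (1:ℤ) ≤ X.length + 1 := by omega
  constructor
  · rw [windowFun_eval n hn _ _ k hXl (by push_cast; omega)]
    have e2 : (X.length + 1 : ℤ) + 1 + k * n = (X.length + 2 : ℤ) + k * n := by ring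
    rw [e2, windowFun_eval n hn _ _ k (by omega) (by push_cast; omega)]
    congr 1
    have t1 : ((X.length + 1 : ℤ) - 1).toNat = X.length := by omega
    have t2 : ((X.length + 2 : ℤ) - 1).toNat = X.length + 1 := by omega
    rw [t1, t2, getD_mid, getD_mid1]
  · have e2 : (X.length + 1 : ℤ) + 1 + k * n = (X.length + 2 : ℤ) + k * n := by ring
    rw [e2, windowFun_eval n hn _ _ k (by omega) (by push_cast; omega),
      windowFun_eval n hn _ _ k hXl (by push_cast; omega)]
    congr 1
    have t1 : ((X.length + 1 : ℤ) - 1).toNat = X.length := by omega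
    have t2 : ((X.length + 2 : ℤ) - 1).toNat = X.length + 1 := by omega
    rw [t1, t2, getD_mid, getD_mid1]

lemma rightStar_right (n : ℕ) (hn : 0 < n) (X Y : List ℤ) (c d f : ℤ)
    (hlen : (X ++ c :: d :: f :: Y).length = n)
    (hadm : min c d < f ∧ f < max c d) :
    RightStar n (windowFun n (X ++ c :: d :: f :: Y)) (windowFun n (X ++ d :: c :: f :: Y)) := by
  have hlen' : X.length + 3 + Y.length = n := by
    have := hlen; simp at this; omega
  refine ⟨(X.length + 1 : ℤ), ?_, ?_, ?_⟩
  · left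
    have hup : windowFun n (X ++ c :: d :: f :: Y) (X.length + 1 : ℤ) = c := by
      rw [windowFun_eval0 n hn _ _ (by omega) (by push_cast; omega)]
      have t1 : ((X.length + 1 : ℤ) - 1).toNat = X.length := by omega
      rw [t1, getD_mid]
    have hup1 : windowFun n (X ++ c :: d :: f :: Y) ((X.length + 1 : ℤ) + 1) = d := by
      have e2 : (X.length + 1 : ℤ) + 1 = (X.length + 2 : ℤ) := by ring
      rw [e2, windowFun_eval0 n hn _ _ (by omega) (by push_cast; omega)]
      have t2 : ((X.length + 2 : ℤ) - 1).toNat = X.length + 1 := by omega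
      rw [t2, getD_mid1]
    have hup2 : windowFun n (X ++ c :: d :: f :: Y) ((X.length + 1 : ℤ) + 2) = f := by
      have e2 : (X.length + 1 : ℤ) + 2 = (X.length + 3 : ℤ) := by ring
      rw [e2, windowFun_eval0 n hn _ _ (by omega) (by push_cast; omega)]
      have t2 : ((X.length + 3 : ℤ) - 1).toNat = X.length + 2 := by omega
      rw [t2, getD_mid2]
    rw [hup, hup1, hup2]
    exact hadm
  · intro k
    have := swap_vals n hn X (f :: Y) c d (by simpa using hlen) k
    exact this
  · intro x hx
    exact swap_far n hn X (f :: Y) c d (by simpa using hlen) x hx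

lemma rightStar_left (n : ℕ) (hn : 0 < n) (X Y : List ℤ) (e c d : ℤ)
    (hlen : (X ++ e :: c :: d :: Y).length = n)
    (hadm : min c d < e ∧ e < max c d) :
    RightStar n (windowFun n (X ++ e :: c :: d :: Y)) (windowFun n (X ++ e :: d :: c :: Y)) := by
  have hlen' : X.length + 3 + Y.length = n := by
    have := hlen; simp at this; omega
  have hX1 : X ++ e :: c :: d :: Y = (X ++ [e]) ++ c :: d :: Y := by simp
  have hX2 : X ++ e :: d :: c :: Y = (X ++ [e]) ++ d :: c :: Y := by simp
  rw [hX1, hX2]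
  refine ⟨(X.length + 2 : ℤ), ?_, ?_, ?_⟩
  · right
    have hup : windowFun n ((X ++ [e]) ++ c :: d :: Y) (X.length + 2 : ℤ) = c := by
      rw [windowFun_eval0 n hn _ _ (by omega) (by push_cast; omega)]
      have t1 : ((X.length + 2 : ℤ) - 1).toNat = X.length + 1 := by omega
      rw [t1, show X.length + 1 = (X ++ [e]).length from by simp]
      exact getD_mid (X ++ [e]) (d :: Y) c
    have hup1 : windowFun n ((X ++ [e]) ++ c :: d :: Y) ((X.length + 2 : ℤ) + 1) = d := by
      have e2 : (X.length + 2 : ℤ) + 1 = (X.length + 3 : ℤ) := by ring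
      rw [e2, windowFun_eval0 n hn _ _ (by omega) (by push_cast; omega)]
      have t2 : ((X.length + 3 : ℤ) - 1).toNat = X.length + 2 := by omega
      rw [t2, show X.length + 2 = (X ++ [e]).length + 1 from by simp]
      exact getD_mid1 (X ++ [e]) Y c d
    have hupm : windowFun n ((X ++ [e]) ++ c :: d :: Y) ((X.length + 2 : ℤ) - 1) = e := by
      have e2 : (X.length + 2 : ℤ) - 1 = (X.length + 1 : ℤ) := by ring
      rw [e2, windowFun_eval0 n hn _ _ (by omega) (by push_cast; omega)]
      have t2 : ((X.length + 1 : ℤ) - 1).toNat = X.length := by omega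
      rw [t2]
      have h3 : (X ++ [e]) ++ c :: d :: Y = X ++ e :: c :: d :: Y := by simp
      rw [h3, getD_mid]
    rw [hup, hup1, hupm]
    exact hadm
  · intro k
    have h := swap_vals n hn (X ++ [e]) Y c d (by simp at hlen ⊢; omega) k
    have hl : ((X ++ [e]).length : ℤ) + 1 = (X.length + 2 : ℤ) := by simp only [List.length_append, List.length_cons, List.length_nil]; push_cast; ring
    rw [hl] at h
    exact h
  · intro x hx
    apply swap_far n hn (X ++ [e]) Y c d (by simp at hlen ⊢; omega) x
    intro k
    have hl : ((X ++ [e]).length : ℤ) + 1 = (X.length + 2 : ℤ) := by simp only [List.length_append, List.length_cons, List.length_nil]; push_cast; ring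
    rw [hl]
    exact hx k
lemma chainA (n : ℕ) (hn : 0 < n) (a : ℤ) (S : List ℤ) :
    ∀ (G Y : List ℤ) (e : ℤ),
    (e :: S).Pairwise (· < ·) → a < e →
    (G ++ e :: (S ++ a :: Y)).length = n →
    Relation.ReflTransGen (RightStar n)
      (windowFun n (G ++ e :: (S ++ a :: Y)))
      (windowFun n (G ++ e :: a :: (S ++ Y))) := by
  induction S with
  | nil => intro G Y e _ _ _; exact .refl
  | cons c S' ih =>
    intro G Y e hs hae hlen
    have hec : e < c := (List.pairwise_cons.mp hs).1 c (by simp)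
    have hs' : (c :: S').Pairwise (· < ·) := (List.pairwise_cons.mp hs).2
    have step1 := ih (G ++ [e]) Y c hs' (lt_trans hae hec)
      (by simp at hlen ⊢; omega)
    have e1 : (G ++ [e]) ++ c :: (S' ++ a :: Y) = G ++ e :: ((c :: S') ++ a :: Y) := by simp
    have e2 : (G ++ [e]) ++ c :: a :: (S' ++ Y) = G ++ e :: c :: a :: (S' ++ Y) := by simp
    rw [e1, e2] at step1
    have step2 : RightStar n (windowFun n (G ++ e :: c :: a :: (S' ++ Y)))
        (windowFun n (G ++ e :: a :: c :: (S' ++ Y))) := by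
      apply rightStar_left n hn G (S' ++ Y) e c a
      · simp at hlen ⊢; omega
      · constructor
        · exact lt_of_le_of_lt (min_le_right c a) hae
        · exact lt_of_lt_of_le hec (le_max_left c a)
    have e3 : G ++ e :: a :: ((c :: S') ++ Y) = G ++ e :: a :: c :: (S' ++ Y) := by simp
    rw [e3]
    exact step1.tail step2

lemma chainB (n : ℕ) (hn : 0 < n) (b : ℤ) (S : List ℤ) :
    ∀ (G Y : List ℤ) (h : ℤ),
    (S ++ [h]).Pairwise (· < ·) → h < b → (∀ z ∈ S, z < b) →
    (G ++ (S ++ b :: h :: Y)).length = n →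
    Relation.ReflTransGen (RightStar n)
      (windowFun n (G ++ (S ++ b :: h :: Y)))
      (windowFun n (G ++ b :: (S ++ h :: Y))) := by
  induction S with
  | nil => intro G Y h _ _ _ _; exact .refl
  | cons x S' ih =>
    intro G Y h hs hhb hSb hlen
    have hs0 : ((x :: S') ++ [h]).Pairwise (· < ·) := hs
    rw [List.cons_append, List.pairwise_cons] at hs0
    have hxall : ∀ z ∈ S' ++ [h], x < z := hs0.1
    have hs' : (S' ++ [h]).Pairwise (· < ·) := hs0.2
    have step1 := ih (G ++ [x]) Y h hs' hhb (fun z hz => hSb z (by simp [hz]))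
      (by simp at hlen ⊢; omega)
    have e1 : (G ++ [x]) ++ (S' ++ b :: h :: Y) = G ++ ((x :: S') ++ b :: h :: Y) := by simp
    have e2 : (G ++ [x]) ++ b :: (S' ++ h :: Y) = G ++ x :: b :: (S' ++ h :: Y) := by simp
    rw [e1, e2] at step1
    obtain ⟨f, Rest, hfR, hxf, hfb⟩ :
        ∃ f Rest, S' ++ h :: Y = f :: Rest ∧ x < f ∧ f < b := by
      cases S' with
      | nil => exact ⟨h, Y, rfl, hxall h (by simp), hhb⟩
      | cons y S'' =>
        refine ⟨y, S'' ++ h :: Y, rfl, hxall y (by simp), hSb y (by simp)⟩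
    have step2 : RightStar n (windowFun n (G ++ x :: b :: (S' ++ h :: Y)))
        (windowFun n (G ++ b :: x :: (S' ++ h :: Y))) := by
      rw [hfR]
      apply rightStar_right n hn G Rest x b f
      · rw [← hfR]; simp at hlen ⊢; omega
      · constructor
        · exact lt_of_le_of_lt (min_le_left x b) hxf
        · exact lt_of_lt_of_le hfb (le_max_right x b)
    have e3 : G ++ b :: ((x :: S') ++ h :: Y) = G ++ b :: x :: (S' ++ h :: Y) := by simp
    rw [e3]
    exact step1.tail step2

lemma exists_seq {α : Type*} {R : α → α → Prop} {u w : α}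
    (h : Relation.ReflTransGen R u w) :
    ∃ (m : ℕ) (v : ℕ → α), v 0 = u ∧ (∀ k, k < m → R (v k) (v (k+1))) ∧ v m = w := by
  induction h with
  | refl => exact ⟨0, fun _ => u, rfl, fun k hk => absurd hk (by omega), rfl⟩
  | @tail bb cc _ hbc ih =>
    obtain ⟨m, v, h0, hs, hm⟩ := ih
    refine ⟨m + 1, fun k => if k ≤ m then v k else cc, by simp [h0], ?_, by simp⟩
    intro k hk
    rcases lt_or_eq_of_le (Nat.lt_succ_iff.mp hk) with h | h
    · simpa [Nat.le_of_lt h, Nat.succ_le_of_lt h] using hs k h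
    · subst h
      simpa [hm] using hbc

lemma windowFun_shift (n : ℕ) (hn : 0 < n) (c : ℤ) (L : List ℤ)
    (hlen : L.length + 1 = n) (i : ℤ) :
    windowFun n (L ++ [c + n]) i = windowFun n (c :: L) (i + 1) := by
  have hn' : (0:ℤ) < n := by exact_mod_cast hn
  have hr : 0 ≤ (i - 1) % n ∧ (i - 1) % n < n :=
    ⟨Int.emod_nonneg _ (by omega), Int.emod_lt_of_pos _ hn'⟩
  have hqr : (n:ℤ) * ((i-1)/n) + (i-1) % n = i - 1 := Int.mul_ediv_add_emod _ _
  set q : ℤ := (i-1)/n with hq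
  set r : ℤ := (i-1)% n with hrd
  have hLHS : windowFun n (L ++ [c + n]) i = (L ++ [c + n]).getD r.toNat 0 + q * n := by
    unfold windowFun; rfl
  rw [hLHS]
  have hstep : i + 1 - 1 = i := by ring
  by_cases hc : r = (n:ℤ) - 1
  · have hi : i = 0 + (q + 1) * n := by
      have h2 : (q + 1) * (n:ℤ) = n * q + n := by ring
      omega
    have hRHS : windowFun n (c :: L) (i + 1) = c + (q + 1) * n := by
      unfold windowFun
      rw [hstep, hi, zero_add, Int.mul_emod_left, Int.mul_ediv_cancel _ (by omega : (n:ℤ) ≠ 0)]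
      simp
    rw [hRHS]
    have hidx : r.toNat = L.length := by omega
    rw [hidx, getD_mid L [] (c + n)]
    ring
  · have hi : i = (r + 1) + q * n := by
      have h2 : q * (n:ℤ) = n * q := mul_comm _ _
      omega
    have hRHS : windowFun n (c :: L) (i + 1) = (c :: L).getD (r + 1).toNat 0 + q * n := by
      unfold windowFun
      rw [hstep, hi, Int.add_mul_emod_self_right, Int.emod_eq_of_lt (by omega) (by omega),
        Int.add_mul_ediv_right _ _ (by omega : (n:ℤ) ≠ 0),
        Int.ediv_eq_zero_of_lt (by omega) (by omega), zero_add]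
    rw [hRHS]
    congr 1
    have h1 : (r + 1).toNat = r.toNat + 1 := by omega
    rw [h1, List.getD_cons_succ, getD_left _ _ _ (by omega)]


/-- In the bumping case of a sign insertion step, `𝔓' ∗ w'` is obtained from
`𝔓 ∗ w` (as affine permutations via their window notations) by a sequence of
right star operations followed by right multiplication by the shift `ω`,
i.e. precomposition with `i ↦ i + 1`. -/
theorem stmt11 (n : ℕ) (hn : 0 < n) (P : List ℤ) (a : ℤ) (w'' : List ℤ) (b : ℤ)
    (hP : P.Pairwise (· < ·))
    (hwinlen : (P ++ a :: w'').length = n)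
    (hbij : Function.Bijective (windowFun n (P ++ a :: w'')))
    (hper : ∀ i : ℤ, windowFun n (P ++ a :: w'') (i + n) = windowFun n (P ++ a :: w'') i + n)
    (hb : b ∈ P) (hab : a < b) (hmin : ∀ p ∈ P, a < p → b ≤ p) :
    ∃ (m : ℕ) (v : ℕ → ℤ → ℤ),
      v 0 = windowFun n (P ++ a :: w'') ∧
      (∀ k : ℕ, k < m → RightStar n (v k) (v (k + 1))) ∧
      windowFun n ((P.map fun x => if x = b then a else x) ++ (w'' ++ [(n : ℤ) + b])) =
        fun i => v m (i + 1) := by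
  obtain ⟨P₁, P₂, rfl⟩ := List.append_of_mem hb
  obtain ⟨hs1, hs2, hcross⟩ := List.pairwise_append.mp hP
  have hP1b : ∀ x ∈ P₁, x < b := fun x hx => hcross x hx b (by simp)
  have hlen0 : P₁.length + P₂.length + 2 + w''.length = n := by
    simp at hwinlen; omega
  -- every element of P₁ is < a
  have ha1 : ∀ x ∈ P₁, x < a := by
    intro x hx
    by_contra hge
    push_neg at hge
    rcases eq_or_lt_of_le hge with heq | hlt
    · -- x = a : contradicts injectivity
      obtain ⟨j, hj, hxj⟩ := List.mem_iff_getElem.mp hx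
      have hv1 : windowFun n ((P₁ ++ b :: P₂) ++ a :: w'') ((j : ℤ) + 1) = x := by
        rw [windowFun_eval0 n hn _ _ (by omega) (by push_cast; omega)]
        have t : (((j : ℤ) + 1) - 1).toNat = j := by omega
        rw [t, getD_left _ _ _ (by simp; omega), getD_left _ _ _ hj,
          List.getD_eq_getElem?_getD, List.getElem?_eq_getElem hj]
        simpa using hxj
      have hv2 : windowFun n ((P₁ ++ b :: P₂) ++ a :: w'')
          ((P₁.length : ℤ) + P₂.length + 2) = a := by
        rw [windowFun_eval0 n hn _ _ (by omega) (by push_cast; omega)]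
        have t : (((P₁.length : ℤ) + P₂.length + 2) - 1).toNat = (P₁ ++ b :: P₂).length := by
          simp; omega
        rw [t, getD_mid]
      have heq2 : windowFun n ((P₁ ++ b :: P₂) ++ a :: w'') ((j : ℤ) + 1) =
          windowFun n ((P₁ ++ b :: P₂) ++ a :: w'') ((P₁.length : ℤ) + P₂.length + 2) := by
        rw [hv1, hv2, heq]
      have := hbij.1 heq2
      omega
    · -- a < x : minimality forces b ≤ x < b
      have h1 := hmin x (by simp [hx]) hlt
      have h2 := hP1b x hx
      omega
  -- the map replaces exactly b by a
  have hmapQ : ∀ (Q : List ℤ), (∀ x ∈ Q, x ≠ b) →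
      (Q.map fun x => if x = b then a else x) = Q := by
    intro Q hQ
    have : (Q.map fun x => if x = b then a else x) = Q.map (fun x => x) :=
      List.map_congr_left (fun x hx => if_neg (hQ x hx))
    rw [this, List.map_id']
  have hbP2 : ∀ x ∈ P₂, b < x := (List.pairwise_cons.mp hs2).1
  have hmap : ((P₁ ++ b :: P₂).map fun x => if x = b then a else x) = P₁ ++ a :: P₂ := by
    rw [List.map_append, List.map_cons, if_pos rfl,
      hmapQ P₁ (fun x hx => ne_of_lt (hP1b x hx)),
      hmapQ P₂ (fun x hx => ne_of_gt (hbP2 x hx))]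
  -- the chain of right star operations
  have hlenA : (P₁ ++ b :: (P₂ ++ a :: w'')).length = n := by simp; omega
  have c1 := chainA n hn a P₂ P₁ w'' b hs2 hab hlenA
  have hsortP1a : (P₁ ++ [a]).Pairwise (· < ·) := by
    apply List.pairwise_append.mpr
    refine ⟨hs1, List.pairwise_singleton _ _, ?_⟩
    intro x hx y hy
    simp at hy
    subst hy
    exact ha1 x hx
  have hlenB : (([] : List ℤ) ++ (P₁ ++ b :: a :: (P₂ ++ w''))).length = n := by simp; omega
  have c2 := chainB n hn b P₁ ([] : List ℤ) (P₂ ++ w'') a hsortP1a hab hP1b hlenB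
  have e0 : P₁ ++ b :: (P₂ ++ a :: w'') = (P₁ ++ b :: P₂) ++ a :: w'' := by simp
  rw [e0] at c1
  have e1 : ([] : List ℤ) ++ (P₁ ++ b :: a :: (P₂ ++ w'')) = P₁ ++ b :: a :: (P₂ ++ w'') := by
    simp
  have e2 : ([] : List ℤ) ++ b :: (P₁ ++ a :: (P₂ ++ w'')) = b :: (P₁ ++ a :: (P₂ ++ w'')) := by
    simp
  rw [e1, e2] at c2
  have ctot := c1.trans c2
  obtain ⟨m, v, h0, hsteps, hm⟩ := exists_seq ctot
  refine ⟨m, v, h0, hsteps, ?_⟩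
  funext i
  rw [hmap]
  have e3 : (P₁ ++ a :: P₂) ++ (w'' ++ [(n : ℤ) + b]) =
      (P₁ ++ a :: (P₂ ++ w'')) ++ [b + (n : ℤ)] := by
    simp [add_comm]
  rw [e3, windowFun_shift n hn b _ (by simp; omega) i, hm]
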